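/- Define φ : ℝ → ℝ by φ(t) = t · log(2·t/(t+1)) + log(2/(t+1)) for t > 0, and define h(t) = (t−1)²/φ(t) for t > 0, t ≠ 1. Then h is strictly increasing where defined: for all real s, t with 0 < s < t, s ≠ 1 and t ≠ 1, one has h(s) < h(t). -/

import Mathlib

/-- The generator of the Jensen–Shannon-type divergence:
`φ(t) = t · log(2t/(t+1)) + log(2/(t+1))`. -/
noncomputable def jsGen (t : ℝ) : ℝ :=
  t * Real.log (2 * t / (t + 1)) + Real.log (2 / (t + 1))

/-- The ratio `h(t) = (t−1)²/φ(t)` of the chi-squared generator to the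
Jensen–Shannon generator. -/
noncomputable def hRatio (t : ℝ) : ℝ := (t - 1) ^ 2 / jsGen t

namespace HRatioAux

noncomputable def F (t : ℝ) : ℝ :=
  t * Real.log t - (t + 1) * Real.log (t + 1) + (t + 1) * Real.log 2

noncomputable def P (t : ℝ) : ℝ := Real.log t - Real.log (t + 1) + Real.log 2

noncomputable def K (t : ℝ) : ℝ := P t - (t - 1) * (t⁻¹ - (t + 1)⁻¹)

noncomputable def G (t : ℝ) : ℝ := 2 * F t - (t - 1) * P t

noncomputable def PsiD (t : ℝ) : ℝ := 4 * P t - 2 * (t - 1)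

noncomputable def Psi (t : ℝ) : ℝ := 4 * F t - (t - 1) ^ 2

noncomputable def H (t : ℝ) : ℝ := (t - 1) ^ 2 / F t

lemma F_one : F 1 = 0 := by simp [F]; norm_num

lemma P_one : P 1 = 0 := by simp [P]; norm_num

lemma K_one : K 1 = 0 := by simp [K, P_one]

lemma G_one : G 1 = 0 := by simp [G, F_one, P_one]

lemma Psi_one : Psi 1 = 0 := by simp [Psi, F_one]

lemma PsiD_one : PsiD 1 = 0 := by simp [PsiD, P_one]

lemma hasDerivAt_log_add_one {t : ℝ} (ht : 0 < t) :
    HasDerivAt (fun x : ℝ => Real.log (x + 1)) (t + 1)⁻¹ t := by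
  have h := (Real.hasDerivAt_log (show t + 1 ≠ 0 by positivity)).comp t
    ((hasDerivAt_id t).add_const 1)
  simpa [Function.comp_def] using h

lemma hasDerivAt_F {t : ℝ} (ht : 0 < t) : HasDerivAt F (P t) t := by
  have h1 : HasDerivAt (fun x : ℝ => x * Real.log x) (Real.log t + 1) t :=
    Real.hasDerivAt_mul_log ht.ne'
  have h2 : HasDerivAt (fun x : ℝ => (x + 1) * Real.log (x + 1)) (Real.log (t + 1) + 1) t := by
    have := (Real.hasDerivAt_mul_log (show t + 1 ≠ 0 by positivity)).comp t
      ((hasDerivAt_id t).add_const 1)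
    simpa [Function.comp_def] using this
  have h3 : HasDerivAt (fun x : ℝ => (x + 1) * Real.log 2) (Real.log 2) t := by
    simpa using ((hasDerivAt_id t).add_const 1).mul_const (Real.log 2)
  have h := (h1.sub h2).add h3
  exact h.congr_deriv (by simp only [P]; ring)

lemma hasDerivAt_P {t : ℝ} (ht : 0 < t) : HasDerivAt P (t⁻¹ - (t + 1)⁻¹) t := by
  have h := ((Real.hasDerivAt_log ht.ne').sub (hasDerivAt_log_add_one ht)).add_const
    (Real.log 2)
  exact h

lemma hasDerivAt_K {t : ℝ} (ht : 0 < t) :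
    HasDerivAt K ((t - 1) * ((t ^ 2)⁻¹ - ((t + 1) ^ 2)⁻¹)) t := by
  have h1 : HasDerivAt (fun x : ℝ => x⁻¹) (-(t ^ 2)⁻¹) t := hasDerivAt_inv ht.ne'
  have h2 : HasDerivAt (fun x : ℝ => (x + 1)⁻¹) (-((t + 1) ^ 2)⁻¹) t := by
    have := (hasDerivAt_inv (show t + 1 ≠ 0 by positivity)).comp t
      ((hasDerivAt_id t).add_const 1)
    simpa [Function.comp_def] using this
  have h3 : HasDerivAt (fun x : ℝ => (x - 1) * (x⁻¹ - (x + 1)⁻¹))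
      (1 * (t⁻¹ - (t + 1)⁻¹) + (t - 1) * (-(t ^ 2)⁻¹ - -((t + 1) ^ 2)⁻¹)) t :=
    ((hasDerivAt_id t).sub_const 1).mul (h1.sub h2)
  have h := (hasDerivAt_P ht).sub h3
  exact h.congr_deriv (by ring)

lemma hasDerivAt_G {t : ℝ} (ht : 0 < t) : HasDerivAt G (K t) t := by
  have h := ((hasDerivAt_F ht).const_mul 2).sub
    (((hasDerivAt_id t).sub_const 1).mul (hasDerivAt_P ht))
  exact h.congr_deriv (by simp only [K, id_eq]; ring)

lemma hasDerivAt_Psi {t : ℝ} (ht : 0 < t) : HasDerivAt Psi (PsiD t) t := by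
  have hsq : HasDerivAt (fun x : ℝ => (x - 1) ^ 2) (2 * (t - 1)) t := by
    have := ((hasDerivAt_id t).sub_const 1).pow 2
    simpa [Pi.pow_def] using this
  have h := ((hasDerivAt_F ht).const_mul 4).sub hsq
  exact h

lemma hasDerivAt_PsiD {t : ℝ} (ht : 0 < t) :
    HasDerivAt PsiD (4 * (t⁻¹ - (t + 1)⁻¹) - 2) t := by
  have h := ((hasDerivAt_P ht).const_mul 4).sub (((hasDerivAt_id t).sub_const 1).const_mul 2)
  exact h.congr_deriv (by ring)

lemma P_neg {t : ℝ} (ht : 0 < t) (h1 : t < 1) : P t < 0 := by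
  have hlt : Real.log (2 * t) < Real.log (t + 1) :=
    Real.log_lt_log (by linarith) (by linarith)
  have : Real.log (2 * t) = Real.log 2 + Real.log t :=
    Real.log_mul two_ne_zero ht.ne'
  simp only [P]; linarith

lemma P_pos {t : ℝ} (h1 : 1 < t) : 0 < P t := by
  have ht : (0:ℝ) < t := by linarith
  have hlt : Real.log (t + 1) < Real.log (2 * t) :=
    Real.log_lt_log (by linarith) (by linarith)
  have : Real.log (2 * t) = Real.log 2 + Real.log t :=
    Real.log_mul two_ne_zero ht.ne'
  simp only [P]; linarith

/-- Generic helper: if `f 1 = 0`, `f' < 0` on `(0,1)` and `f' > 0` on `(1,∞)`,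
then `f > 0` on `(0,∞) \ {1}`. -/
lemma pos_off_one (f f' : ℝ → ℝ)
    (hder : ∀ x, 0 < x → HasDerivAt f (f' x) x)
    (h1 : f 1 = 0)
    (hneg : ∀ x, 0 < x → x < 1 → f' x < 0)
    (hpos : ∀ x, 1 < x → 0 < f' x) :
    ∀ x, 0 < x → x ≠ 1 → 0 < f x := by
  have hanti : StrictAntiOn f (Set.Ioc 0 1) := by
    apply strictAntiOn_of_deriv_neg (convex_Ioc 0 1)
    · intro x hx
      exact (hder x hx.1).continuousAt.continuousWithinAt
    · intro x hx
      rw [interior_Ioc] at hx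
      rw [(hder x hx.1).deriv]
      exact hneg x hx.1 hx.2
  have hmono : StrictMonoOn f (Set.Ici 1) := by
    apply strictMonoOn_of_deriv_pos (convex_Ici 1)
    · intro x hx
      exact (hder x (lt_of_lt_of_le one_pos hx)).continuousAt.continuousWithinAt
    · intro x hx
      rw [interior_Ici] at hx
      rw [(hder x (lt_trans one_pos hx)).deriv]
      exact hpos x hx
  intro x hx hx1
  rcases lt_or_gt_of_ne hx1 with h | h
  · have := hanti ⟨hx, h.le⟩ ⟨one_pos, le_refl 1⟩ h
    linarith
  · have := hmono (Set.mem_Ici.mpr le_rfl) h.le h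
    linarith

/-- Generic helper: if `f 1 = 0` and `f' > 0` off `1`, then `f < 0` on `(0,1)`
and `f > 0` on `(1,∞)`. -/
lemma sign_off_one (f f' : ℝ → ℝ)
    (hder : ∀ x, 0 < x → HasDerivAt f (f' x) x)
    (h1 : f 1 = 0)
    (hpos : ∀ x, 0 < x → x ≠ 1 → 0 < f' x) :
    (∀ x, 0 < x → x < 1 → f x < 0) ∧ (∀ x, 1 < x → 0 < f x) := by
  have hm1 : StrictMonoOn f (Set.Ioc 0 1) := by
    apply strictMonoOn_of_deriv_pos (convex_Ioc 0 1)
    · intro x hx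
      exact (hder x hx.1).continuousAt.continuousWithinAt
    · intro x hx
      rw [interior_Ioc] at hx
      rw [(hder x hx.1).deriv]
      exact hpos x hx.1 hx.2.ne
  have hm2 : StrictMonoOn f (Set.Ici 1) := by
    apply strictMonoOn_of_deriv_pos (convex_Ici 1)
    · intro x hx
      exact (hder x (lt_of_lt_of_le one_pos hx)).continuousAt.continuousWithinAt
    · intro x hx
      rw [interior_Ici] at hx
      rw [(hder x (lt_trans one_pos hx)).deriv]
      exact hpos x (lt_trans one_pos hx) hx.ne'
  constructor
  · intro x hx hx1
    have := hm1 ⟨hx, hx1.le⟩ ⟨one_pos, le_refl 1⟩ hx1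
    linarith
  · intro x hx
    have := hm2 (Set.mem_Ici.mpr le_rfl) hx.le hx
    linarith

lemma F_pos {t : ℝ} (ht : 0 < t) (ht1 : t ≠ 1) : 0 < F t :=
  pos_off_one F P (fun x hx => hasDerivAt_F hx) F_one
    (fun x hx hx1 => P_neg hx hx1) (fun x hx => P_pos hx) t ht ht1

lemma K_pos {t : ℝ} (ht : 0 < t) (ht1 : t ≠ 1) : 0 < K t := by
  refine pos_off_one K (fun t => (t - 1) * ((t ^ 2)⁻¹ - ((t + 1) ^ 2)⁻¹))
    (fun x hx => hasDerivAt_K hx) K_one ?_ ?_ t ht ht1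
  · intro x hx hx1
    have hsq : (x:ℝ) ^ 2 < (x + 1) ^ 2 := by nlinarith
    have hinv : ((x + 1) ^ 2)⁻¹ < (x ^ 2)⁻¹ := by
      apply inv_strictAnti₀ (by positivity) hsq
    apply mul_neg_of_neg_of_pos (by linarith) (by linarith)
  · intro x hx
    have hsq : (x:ℝ) ^ 2 < (x + 1) ^ 2 := by nlinarith
    have hinv : ((x + 1) ^ 2)⁻¹ < (x ^ 2)⁻¹ := by
      apply inv_strictAnti₀ (by positivity) hsq
    apply mul_pos (by linarith) (by linarith)

lemma G_sign :
    (∀ x, 0 < x → x < 1 → G x < 0) ∧ (∀ x, 1 < x → 0 < G x) :=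
  sign_off_one G K (fun x hx => hasDerivAt_G hx) G_one (fun x hx hx1 => K_pos hx hx1)

lemma PsiD_neg {t : ℝ} (ht : 0 < t) (ht1 : t ≠ 1) : PsiD t < 0 := by
  have hrw : ∀ x : ℝ, 0 < x →
      4 * (x⁻¹ - (x + 1)⁻¹) - 2 = (4 - 2 * (x * (x + 1))) / (x * (x + 1)) := by
    intro x hx
    field_simp
    ring
  have key : 0 < -PsiD t := by
    refine pos_off_one (fun t => -PsiD t) (fun t => -(4 * (t⁻¹ - (t + 1)⁻¹) - 2))
      (fun x hx => (hasDerivAt_PsiD hx).neg) (by simp [PsiD_one]) ?_ ?_ t ht ht1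
    · intro x hx hx1
      have hpos : (0:ℝ) < 4 * (x⁻¹ - (x + 1)⁻¹) - 2 := by
        rw [hrw x hx]
        apply div_pos (by nlinarith) (by positivity)
      linarith
    · intro x hx
      have hx0 : (0:ℝ) < x := by linarith
      have hneg : 4 * (x⁻¹ - (x + 1)⁻¹) - 2 < 0 := by
        rw [hrw x hx0]
        apply div_neg_of_neg_of_pos (by nlinarith) (by positivity)
      linarith
  linarith

lemma Psi_sign :
    (∀ x, 0 < x → x < 1 → 0 < Psi x) ∧ (∀ x, 1 < x → Psi x < 0) := by
  have key := sign_off_one (fun t => -Psi t) (fun t => -PsiD t)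
    (fun x hx => (hasDerivAt_Psi hx).neg) (by simp [Psi_one])
    (fun x hx hx1 => by simpa using PsiD_neg hx hx1)
  constructor
  · intro x hx hx1
    have h : -Psi x < 0 := key.1 x hx hx1
    linarith
  · intro x hx
    have h : 0 < -Psi x := key.2 x hx
    linarith

lemma hasDerivAt_H {t : ℝ} (ht : 0 < t) (ht1 : t ≠ 1) :
    HasDerivAt H ((t - 1) * G t / (F t) ^ 2) t := by
  have hF := F_pos ht ht1
  have hu : HasDerivAt (fun x : ℝ => (x - 1) ^ 2) (2 * (t - 1)) t := by
    have := ((hasDerivAt_id t).sub_const 1).pow 2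
    simpa [Pi.pow_def] using this
  have h := hu.div (hasDerivAt_F ht) hF.ne'
  exact h.congr_deriv (by simp only [G]; ring)

lemma H_mono_lt : StrictMonoOn H (Set.Ioo 0 1) := by
  apply strictMonoOn_of_deriv_pos (convex_Ioo 0 1)
  · intro x hx
    exact (hasDerivAt_H hx.1 hx.2.ne).continuousAt.continuousWithinAt
  · intro x hx
    rw [interior_Ioo] at hx
    rw [(hasDerivAt_H hx.1 hx.2.ne).deriv]
    have hG := G_sign.1 x hx.1 hx.2
    have hF := F_pos hx.1 hx.2.ne
    have hx2 : x < 1 := hx.2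
    have hx1 : 0 < x := hx.1
    apply div_pos (mul_pos_of_neg_of_neg (by linarith) hG) (by positivity)

lemma H_mono_gt : StrictMonoOn H (Set.Ioi 1) := by
  apply strictMonoOn_of_deriv_pos (convex_Ioi 1)
  · intro x hx
    exact (hasDerivAt_H (lt_trans one_pos hx) (ne_of_gt hx)).continuousAt.continuousWithinAt
  · intro x hx
    rw [interior_Ioi] at hx
    rw [(hasDerivAt_H (lt_trans one_pos hx) (ne_of_gt hx)).deriv]
    have hG := G_sign.2 x hx
    have hF := F_pos (lt_trans one_pos hx) (ne_of_gt hx)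
    have hx1 : 1 < x := hx
    apply div_pos (mul_pos (by linarith) hG) (by positivity)

lemma jsGen_eq_F {t : ℝ} (ht : 0 < t) : jsGen t = F t := by
  have ht1 : t + 1 ≠ 0 := by positivity
  have h2t : 2 * t ≠ 0 := by positivity
  rw [jsGen, F, Real.log_div h2t ht1, Real.log_div two_ne_zero ht1,
    Real.log_mul two_ne_zero ht.ne']
  ring

lemma hRatio_eq_H {t : ℝ} (ht : 0 < t) : hRatio t = H t := by
  rw [hRatio, H, jsGen_eq_F ht]

end HRatioAux

/-- `h` is strictly increasing where it is defined: for `0 < s < t` with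
`s ≠ 1` and `t ≠ 1`, `h(s) < h(t)`. -/
theorem hRatio_strictMono :
    ∀ s t : ℝ, 0 < s → s < t → s ≠ 1 → t ≠ 1 → hRatio s < hRatio t := by
  intro s t hs hst hs1 ht1
  have ht : 0 < t := lt_trans hs hst
  rw [HRatioAux.hRatio_eq_H hs, HRatioAux.hRatio_eq_H ht]
  rcases lt_or_gt_of_ne ht1 with htlt | htgt
  · -- both in (0,1)
    exact HRatioAux.H_mono_lt ⟨hs, lt_trans hst htlt⟩ ⟨lt_trans hs hst, htlt⟩ hst
  · rcases lt_or_gt_of_ne hs1 with hslt | hsgt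
    · -- s < 1 < t : use H s < 4 < H t
      have hFs := HRatioAux.F_pos hs hs1
      have hFt := HRatioAux.F_pos ht ht1
      have hPsis := HRatioAux.Psi_sign.1 s hs hslt
      have hPsit := HRatioAux.Psi_sign.2 t htgt
      have h1 : HRatioAux.H s < 4 := by
        rw [HRatioAux.H, div_lt_iff₀ hFs]
        simp only [HRatioAux.Psi] at hPsis
        linarith
      have h2 : (4:ℝ) < HRatioAux.H t := by
        rw [HRatioAux.H, lt_div_iff₀ hFt]
        simp only [HRatioAux.Psi] at hPsit
        linarith
      linarith
    · -- both in (1, ∞)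
      exact HRatioAux.H_mono_gt hsgt (lt_trans hsgt hst) hst
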